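/- arXiv:1302.7302 — 5 statements merged into one kernel-verified Lean document; each statement's English description precedes it below -/
import Mathlib

section
/- With notation as in the construction of the universal infinitesimal deformation: if μ and μ' are two choices of representative cocycles for classes in H = H²(L,L) differing by coboundaries, i.e., μ(h) − μ'(h) = δ¹(f(h)) for a linear map f: H → C¹(L,L), then the map ρ: L ⊕ Hom(H,L) → L ⊕ Hom(H,L), ρ(l,φ) = (l, ψ) with ψ(h) = f(h)(l) + φ(h), is a bijective weak morphism between the two resulting Hom-Leibniz algebra structures: ρ[(l₁,φ₁),(l₂,φ₂)]_μ = [ρ(l₁,φ₁), ρ(l₂,φ₂)]_{μ'}. -/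
section Independence

variable {K L H : Type*} [Field K] [AddCommGroup L] [Module K L]
  [AddCommGroup H] [Module K H]

/-- The bracket on `L ⊕ Hom(H, L)` associated with a choice `μ` of representative
cocycles. -/
noncomputable def infBracket (b : L →ₗ[K] L →ₗ[K] L)
    (μ : H →ₗ[K] (L →ₗ[K] L →ₗ[K] L))
    (p q : L × (H →ₗ[K] L)) : L × (H →ₗ[K] L) :=
  (b p.1 q.1,
    (μ.flip p.1).flip q.1 + (b.flip q.1).comp p.2 + (b p.1).comp q.2)

/-- The comparison map `ρ(l, φ) = (l, ψ)` with `ψ(h) = f(h)(l) + φ(h)`. -/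
def rhoMap (f : H →ₗ[K] (L →ₗ[K] L)) (p : L × (H →ₗ[K] L)) :
    L × (H →ₗ[K] L) :=
  (p.1, f.flip p.1 + p.2)

/-- If two choices `μ, μ'` of representative cocycles differ by the coboundaries
`δ¹(f h)`, then `ρ(l,φ) = (l, h ↦ f(h)(l) + φ(h))` is a bijective weak morphism
between the two Hom-Leibniz structures on `L ⊕ Hom(H, L)`. -/
theorem rhoMap_weak_isomorphism (b : L →ₗ[K] L →ₗ[K] L)
    [FiniteDimensional K H]
    (μ μ' : H →ₗ[K] (L →ₗ[K] L →ₗ[K] L)) (f : H →ₗ[K] (L →ₗ[K] L))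
    (hdiff : ∀ (h : H) (x y : L),
      μ h x y - μ' h x y = b x (f h y) + b (f h x) y - f h (b x y)) :
    Function.Bijective (rhoMap f) ∧
      ∀ p q : L × (H →ₗ[K] L),
        rhoMap f (infBracket b μ p q) = infBracket b μ' (rhoMap f p) (rhoMap f q) := by
  constructor
  · constructor
    · intro p q hpq
      simp only [rhoMap, Prod.mk.injEq] at hpq
      obtain ⟨h1, h2⟩ := hpq
      rw [h1] at h2
      exact Prod.ext h1 (add_left_cancel h2)
    · intro p
      exact ⟨(p.1, p.2 - f.flip p.1), by simp [rhoMap]⟩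
  · intro p q
    apply Prod.ext
    · rfl
    · ext h
      simp only [rhoMap, infBracket, LinearMap.add_apply, LinearMap.flip_apply,
        LinearMap.coe_comp, Function.comp_apply]
      simp only [map_add, LinearMap.add_apply]
      linear_combination (norm := abel) hdiff h p.1 q.1

end Independence
end

section
/- Let λ be an infinitesimal deformation of a Hom-Leibniz algebra (L,[·,·],α) with finite-dimensional base (A, m) where m² = 0, and let ξ: A → K be linear with ξ(1) = 0 (i.e., ξ ∈ m'). Define ψ_{λ,ξ}(l₁,l₂) = (ξ ⊗ id)([1⊗l₁, 1⊗l₂]_λ). Then ψ_{λ,ξ} is a 2-cocycle of L with adjoint coefficients: δ² ψ_{λ,ξ} = 0. -/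
open scoped TensorProduct

/-- For an infinitesimal deformation `λ` of a Hom-Leibniz algebra `(L,[·,·],α)` with
finite-dimensional base `(A, m)`, `m² = 0`, and any `ξ ∈ m'` (a linear functional on `A`
with `ξ(1) = 0`), the 2-cochain `ψ_{λ,ξ}(l₁,l₂) = (ξ ⊗ id)([1⊗l₁, 1⊗l₂]_λ)` is a
2-cocycle: `δ²ψ_{λ,ξ} = 0`. -/
theorem psi_lambda_xi_is_cocycle {K A L : Type*} [Field K] [CommRing A] [Algebra K A]
    [FiniteDimensional K A] [AddCommGroup L] [Module K L]
    (ε : A →ₐ[K] K)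
    (hm2 : ∀ x y : A, ε x = 0 → ε y = 0 → x * y = 0)
    (b : L →ₗ[K] L →ₗ[K] L) (α : L →ₗ[K] L)
    (hleib : ∀ x y z : L, b (α x) (b y z) = b (b x y) (α z) - b (b x z) (α y))
    (bl : (A ⊗[K] L) →ₗ[A] (A ⊗[K] L) →ₗ[A] (A ⊗[K] L))
    (hlleib : ∀ u v w : A ⊗[K] L,
      bl (LinearMap.lTensor A α u) (bl v w)
        = bl (bl u v) (LinearMap.lTensor A α w) - bl (bl u w) (LinearMap.lTensor A α v))
    (hhom : ∀ u v : A ⊗[K] L,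
      (TensorProduct.lid K L) ((TensorProduct.map ε.toLinearMap LinearMap.id) (bl u v))
        = b ((TensorProduct.lid K L) ((TensorProduct.map ε.toLinearMap LinearMap.id) u))
            ((TensorProduct.lid K L) ((TensorProduct.map ε.toLinearMap LinearMap.id) v)))
    (ξ : A →ₗ[K] K) (hξ : ξ 1 = 0)
    (ψ : L → L → L)
    (hψ : ∀ l₁ l₂ : L, ψ l₁ l₂ =
      (TensorProduct.lid K L)
        ((TensorProduct.map ξ LinearMap.id) (bl ((1 : A) ⊗ₜ[K] l₁) ((1 : A) ⊗ₜ[K] l₂)))) :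
    ∀ l₁ l₂ l₃ : L,
      b (α l₁) (ψ l₂ l₃) + b (ψ l₁ l₃) (α l₂) - b (ψ l₁ l₂) (α l₃)
        - ψ (b l₁ l₂) (α l₃) + ψ (b l₁ l₃) (α l₂) + ψ (α l₁) (b l₂ l₃) = 0 := by
  classical
  set f : (A ⊗[K] L) →ₗ[K] L :=
    (TensorProduct.lid K L).toLinearMap ∘ₗ TensorProduct.map ξ LinearMap.id with hfdef
  set e : (A ⊗[K] L) →ₗ[K] L :=
    (TensorProduct.lid K L).toLinearMap ∘ₗ TensorProduct.map ε.toLinearMap LinearMap.id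
    with hedef
  have f_tmul : ∀ (a : A) (y : L), f (a ⊗ₜ[K] y) = ξ a • y := by
    intro a y; simp [hfdef]
  have e_tmul : ∀ (a : A) (y : L), e (a ⊗ₜ[K] y) = ε a • y := by
    intro a y; simp [hedef]
  have e_one : ∀ y : L, e ((1 : A) ⊗ₜ[K] y) = y := by
    intro y; rw [e_tmul]; simp
  -- the derivation identity for ξ
  have hkey : ∀ a c : A, ξ (a * c) = ε a * ξ c + ξ a * ε c := by
    intro a c
    have h0 : (a - algebraMap K A (ε a)) * (c - algebraMap K A (ε c)) = 0 :=
      hm2 _ _ (by simp) (by simp)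
    have hexp : a * c = algebraMap K A (ε c) * a + algebraMap K A (ε a) * c
        - algebraMap K A (ε a) * algebraMap K A (ε c) := by
      linear_combination h0
    rw [hexp, map_sub, map_add, ← Algebra.smul_def, ← Algebra.smul_def, ← Algebra.smul_def,
      map_smul, map_smul, map_smul, Algebra.algebraMap_eq_smul_one, map_smul, smul_eq_mul,
      smul_eq_mul, smul_eq_mul, smul_eq_mul, hξ]
    ring
  -- behaviour of f on A-scalar multiples
  have f_smul : ∀ (a : A) (t : A ⊗[K] L), f (a • t) = ε a • f t + ξ a • e t := by
    intro a t
    induction t using TensorProduct.induction_on with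
    | zero => simp
    | tmul c y =>
        have hs : a • (c ⊗ₜ[K] y) = (a * c) ⊗ₜ[K] y := by
          rw [TensorProduct.smul_tmul', smul_eq_mul]
        rw [hs, f_tmul, f_tmul, e_tmul, hkey, add_smul, smul_smul, smul_smul]
    | add u v hu hv =>
        rw [smul_add, map_add, hu, hv, map_add, map_add, smul_add, smul_add]
        abel
  -- e of bl of unit tensors
  have e_bl : ∀ u v : A ⊗[K] L, e (bl u v) = b (e u) (e v) := by
    intro u v
    simpa [hedef] using hhom u v
  have hψ' : ∀ x y : L, ψ x y = f (bl ((1:A) ⊗ₜ[K] x) ((1:A) ⊗ₜ[K] y)) := by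
    intro x y
    simpa [hfdef] using hψ x y
  -- left lemma
  have L1 : ∀ (x : L) (w : A ⊗[K] L),
      f (bl ((1:A) ⊗ₜ[K] x) w)
        = (f ∘ₗ ((bl ((1:A) ⊗ₜ[K] x)).restrictScalars K) ∘ₗ TensorProduct.mk K A L 1) (e w)
          + b x (f w) := by
    intro x w
    set Ψ : L →ₗ[K] L :=
      f ∘ₗ ((bl ((1:A) ⊗ₜ[K] x)).restrictScalars K) ∘ₗ TensorProduct.mk K A L 1 with hΨ
    induction w using TensorProduct.induction_on with
    | zero => simp
    | tmul a y =>
        have hs : a ⊗ₜ[K] y = a • ((1:A) ⊗ₜ[K] y) := by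
          rw [TensorProduct.smul_tmul', smul_eq_mul, mul_one]
        rw [e_tmul, f_tmul, map_smul, map_smul, hs, map_smul, f_smul, e_bl, e_one, e_one]
        simp [hΨ]
    | add u v hu hv =>
        simp only [map_add, LinearMap.add_apply, hu, hv]
        abel
  -- right lemma
  have L2 : ∀ (x : L) (w : A ⊗[K] L),
      f (bl w ((1:A) ⊗ₜ[K] x))
        = (f ∘ₗ ((bl.flip ((1:A) ⊗ₜ[K] x)).restrictScalars K) ∘ₗ TensorProduct.mk K A L 1)
            (e w) + b (f w) x := by
    intro x w
    set Ψ : L →ₗ[K] L :=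
      f ∘ₗ ((bl.flip ((1:A) ⊗ₜ[K] x)).restrictScalars K) ∘ₗ TensorProduct.mk K A L 1 with hΨ
    induction w using TensorProduct.induction_on with
    | zero => simp
    | tmul a y =>
        have hs : a ⊗ₜ[K] y = a • ((1:A) ⊗ₜ[K] y) := by
          rw [TensorProduct.smul_tmul', smul_eq_mul, mul_one]
        have hbl : bl (a • ((1:A) ⊗ₜ[K] y)) ((1:A) ⊗ₜ[K] x)
            = a • bl ((1:A) ⊗ₜ[K] y) ((1:A) ⊗ₜ[K] x) := by
          rw [map_smul]; rfl
        rw [e_tmul, f_tmul, map_smul, LinearMap.map_smul₂, hs, hbl,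
          f_smul, e_bl, e_one, e_one]
        simp [hΨ]
    | add u v hu hv =>
        simp only [map_add, LinearMap.add_apply, hu, hv]
        abel
  intro l₁ l₂ l₃
  have H := hlleib ((1:A) ⊗ₜ[K] l₁) ((1:A) ⊗ₜ[K] l₂) ((1:A) ⊗ₜ[K] l₃)
  rw [LinearMap.lTensor_tmul, LinearMap.lTensor_tmul, LinearMap.lTensor_tmul] at H
  have hA : f (bl ((1:A) ⊗ₜ[K] α l₁) (bl ((1:A) ⊗ₜ[K] l₂) ((1:A) ⊗ₜ[K] l₃)))
      = ψ (α l₁) (b l₂ l₃) + b (α l₁) (ψ l₂ l₃) := by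
    rw [L1 (α l₁) (bl ((1:A) ⊗ₜ[K] l₂) ((1:A) ⊗ₜ[K] l₃)), e_bl, e_one, e_one]
    simp only [LinearMap.comp_apply, LinearMap.coe_restrictScalars, TensorProduct.mk_apply]
    rw [← hψ', ← hψ']
  have hB : f (bl (bl ((1:A) ⊗ₜ[K] l₁) ((1:A) ⊗ₜ[K] l₂)) ((1:A) ⊗ₜ[K] α l₃))
      = ψ (b l₁ l₂) (α l₃) + b (ψ l₁ l₂) (α l₃) := by
    rw [L2 (α l₃) (bl ((1:A) ⊗ₜ[K] l₁) ((1:A) ⊗ₜ[K] l₂)), e_bl, e_one, e_one]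
    simp only [LinearMap.comp_apply, LinearMap.coe_restrictScalars, TensorProduct.mk_apply,
      LinearMap.flip_apply]
    rw [← hψ', ← hψ']
  have hC : f (bl (bl ((1:A) ⊗ₜ[K] l₁) ((1:A) ⊗ₜ[K] l₃)) ((1:A) ⊗ₜ[K] α l₂))
      = ψ (b l₁ l₃) (α l₂) + b (ψ l₁ l₃) (α l₂) := by
    rw [L2 (α l₂) (bl ((1:A) ⊗ₜ[K] l₁) ((1:A) ⊗ₜ[K] l₃)), e_bl, e_one, e_one]
    simp only [LinearMap.comp_apply, LinearMap.coe_restrictScalars, TensorProduct.mk_apply,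
      LinearMap.flip_apply]
    rw [← hψ', ← hψ']
  have H' := congrArg f H
  rw [map_sub, hA, hB, hC] at H'
  have key : b (α l₁) (ψ l₂ l₃) + b (ψ l₁ l₃) (α l₂) - b (ψ l₁ l₂) (α l₃)
      - ψ (b l₁ l₂) (α l₃) + ψ (b l₁ l₃) (α l₂) + ψ (α l₁) (b l₂ l₃)
      = (ψ (α l₁) (b l₂ l₃) + b (α l₁) (ψ l₂ l₃))
        - ((ψ (b l₁ l₂) (α l₃) + b (ψ l₁ l₂) (α l₃))
          - (ψ (b l₁ l₃) (α l₂) + b (ψ l₁ l₃) (α l₂))) := by abel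
  rw [key, H', sub_self]
end

section
/- Given a deformation λ of a Hom-Leibniz algebra L with base (A,m), another augmented commutative algebra (A',m'), and an augmentation-preserving unital algebra homomorphism φ: A → A', the push-out bracket [a₁'⊗_A(a₁⊗l₁), a₂'⊗_A(a₂⊗l₂)]_{φ*λ} = a₁'a₂' ⊗_A [a₁⊗l₁, a₂⊗l₂]_λ makes (A'⊗L, [·,·]_{φ*λ}, id⊗α) a Hom-Leibniz A'-algebra, i.e., the push-out of a deformation is a deformation. -/
open scoped TensorProduct

/-- The push-out of a deformation of a Hom-Leibniz algebra along an
augmentation-preserving unital algebra homomorphism `φ : A → A'` is again a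
deformation: the push-out bracket satisfies the Hom-Leibniz identity on `A' ⊗ L`
(with structure map `id ⊗ α`) and `ε' ⊗ id` is a Hom-Leibniz homomorphism. -/
theorem pushout_is_deformation {K A A' L : Type*} [Field K]
    [CommRing A] [Algebra K A] [CommRing A'] [Algebra K A']
    [AddCommGroup L] [Module K L]
    (ε : A →ₐ[K] K) (ε' : A' →ₐ[K] K)
    (φ : A →ₐ[K] A') (hφ : ∀ a : A, ε' (φ a) = ε a)
    (b : L →ₗ[K] L →ₗ[K] L) (α : L →ₗ[K] L)
    -- the deformation λ with base A
    (bl : (A ⊗[K] L) →ₗ[A] (A ⊗[K] L) →ₗ[A] (A ⊗[K] L))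
    (hlleib : ∀ u v w : A ⊗[K] L,
      bl (LinearMap.lTensor A α u) (bl v w)
        = bl (bl u v) (LinearMap.lTensor A α w) - bl (bl u w) (LinearMap.lTensor A α v))
    (hhom : ∀ u v : A ⊗[K] L,
      (TensorProduct.lid K L) ((TensorProduct.map ε.toLinearMap LinearMap.id) (bl u v))
        = b ((TensorProduct.lid K L) ((TensorProduct.map ε.toLinearMap LinearMap.id) u))
            ((TensorProduct.lid K L) ((TensorProduct.map ε.toLinearMap LinearMap.id) v)))
    -- the push-out bracket φ⋆λ with base A'
    (bl' : (A' ⊗[K] L) →ₗ[A'] (A' ⊗[K] L) →ₗ[A'] (A' ⊗[K] L))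
    (hpush : ∀ (a₁' a₂' : A') (l₁ l₂ : L),
      bl' (a₁' ⊗ₜ[K] l₁) (a₂' ⊗ₜ[K] l₂)
        = (a₁' * a₂') •
            (TensorProduct.map φ.toLinearMap LinearMap.id
              (bl ((1 : A) ⊗ₜ[K] l₁) ((1 : A) ⊗ₜ[K] l₂)))) :
    (∀ u v w : A' ⊗[K] L,
      bl' (LinearMap.lTensor A' α u) (bl' v w)
        = bl' (bl' u v) (LinearMap.lTensor A' α w)
          - bl' (bl' u w) (LinearMap.lTensor A' α v)) ∧
    (∀ u v : A' ⊗[K] L,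
      (TensorProduct.lid K L) ((TensorProduct.map ε'.toLinearMap LinearMap.id) (bl' u v))
        = b ((TensorProduct.lid K L) ((TensorProduct.map ε'.toLinearMap LinearMap.id) u))
            ((TensorProduct.lid K L) ((TensorProduct.map ε'.toLinearMap LinearMap.id) v))) := by
  set Φ : A ⊗[K] L →ₗ[K] A' ⊗[K] L :=
    TensorProduct.map φ.toLinearMap LinearMap.id with hΦdef
  -- Φ is φ-semilinear with respect to the scalar actions
  have hΦsmul : ∀ (a : A) (Y : A ⊗[K] L), Φ (a • Y) = φ a • Φ Y := by
    intro a Y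
    induction Y using TensorProduct.induction_on with
    | zero => simp
    | tmul c l =>
        simp [hΦdef, TensorProduct.smul_tmul', smul_eq_mul, map_mul]
    | add y z hy hz => simp [smul_add, hy, hz]
  -- lTensor commutes with the A'-action
  have hsmul' : ∀ (a' : A') (u : A' ⊗[K] L),
      LinearMap.lTensor A' α (a' • u) = a' • LinearMap.lTensor A' α u := by
    intro a' u
    induction u using TensorProduct.induction_on with
    | zero => simp
    | tmul c l => simp [TensorProduct.smul_tmul']
    | add y z hy hz => simp [smul_add, hy, hz]
  -- Φ intertwines the structure maps
  have hΦα : ∀ Y : A ⊗[K] L,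
      Φ (LinearMap.lTensor A α Y) = LinearMap.lTensor A' α (Φ Y) := by
    intro Y
    induction Y using TensorProduct.induction_on with
    | zero => simp
    | tmul c l => simp [hΦdef]
    | add y z hy hz => simp [hy, hz]
  -- representation of pure tensors
  have hrep : ∀ (a' : A') (l : L),
      (a' ⊗ₜ[K] l : A' ⊗[K] L) = a' • Φ ((1 : A) ⊗ₜ[K] l) := by
    intro a' l
    simp [hΦdef, TensorProduct.smul_tmul', smul_eq_mul]
  -- the key compatibility: bl' ∘ (Φ × Φ) = Φ ∘ bl
  have hkey : ∀ Y Z : A ⊗[K] L, bl' (Φ Y) (Φ Z) = Φ (bl Y Z) := by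
    intro Y Z
    induction Y using TensorProduct.induction_on with
    | zero => simp
    | tmul a l =>
        induction Z using TensorProduct.induction_on with
        | zero => simp
        | tmul c m =>
            have h1 : (a ⊗ₜ[K] l : A ⊗[K] L) = a • ((1 : A) ⊗ₜ[K] l) := by
              simp [TensorProduct.smul_tmul', smul_eq_mul]
            have h2 : (c ⊗ₜ[K] m : A ⊗[K] L) = c • ((1 : A) ⊗ₜ[K] m) := by
              simp [TensorProduct.smul_tmul', smul_eq_mul]
            have hL : Φ (a ⊗ₜ[K] l) = (φ a) ⊗ₜ[K] l := by simp [hΦdef]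
            have hM : Φ (c ⊗ₜ[K] m) = (φ c) ⊗ₜ[K] m := by simp [hΦdef]
            rw [hL, hM, hpush, h1, h2]
            simp only [map_smul, LinearMap.smul_apply, hΦsmul, mul_smul]
            exact smul_comm _ _ _
        | add y z hy hz => simp only [map_add, hy, hz]
    | add y z hy hz => simp only [map_add, LinearMap.add_apply, hy, hz]
  constructor
  · -- the Hom-Leibniz identity
    intro u v w
    induction u using TensorProduct.induction_on with
    | zero => simp
    | add y z hy hz =>
        simp only [map_add, LinearMap.add_apply, hy, hz]
        abel
    | tmul a₁' l₁ =>
      induction v using TensorProduct.induction_on with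
      | zero => simp
      | add y z hy hz =>
          simp only [map_add, LinearMap.add_apply, hy, hz]
          abel
      | tmul a₂' l₂ =>
        induction w using TensorProduct.induction_on with
        | zero => simp
        | add y z hy hz =>
            simp only [map_add, LinearMap.add_apply, hy, hz]
            abel
        | tmul a₃' l₃ =>
            rw [hrep a₁' l₁, hrep a₂' l₂, hrep a₃' l₃]
            simp only [hsmul', map_smul, LinearMap.smul_apply, ← hΦα, hkey]
            rw [hlleib, map_sub, smul_sub, smul_sub, smul_sub]
            rw [smul_comm a₂' a₃']
  · -- ε' ⊗ id is a Hom-Leibniz homomorphism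
    set E : A' ⊗[K] L → L :=
      fun u => (TensorProduct.lid K L) ((TensorProduct.map ε'.toLinearMap LinearMap.id) u)
      with hEdef
    have hEadd : ∀ u v : A' ⊗[K] L, E (u + v) = E u + E v := by
      intro u v; simp [hEdef]
    have hEzero : E 0 = 0 := by simp [hEdef]
    have hEsmul : ∀ (a' : A') (u : A' ⊗[K] L), E (a' • u) = ε' a' • E u := by
      intro a' u
      induction u using TensorProduct.induction_on with
      | zero => simp [hEdef]
      | tmul c l =>
          simp [hEdef, TensorProduct.smul_tmul', smul_eq_mul, map_mul, mul_smul]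
      | add y z hy hz => simp only [smul_add, hEadd, hy, hz]
    have hEΦ : ∀ Y : A ⊗[K] L,
        E (Φ Y)
          = (TensorProduct.lid K L) ((TensorProduct.map ε.toLinearMap LinearMap.id) Y) := by
      intro Y
      induction Y using TensorProduct.induction_on with
      | zero => simp [hEdef]
      | tmul c l => simp [hEdef, hΦdef, hφ]
      | add y z hy hz => simp only [map_add, hEadd, hy, hz]
    intro u v
    show E (bl' u v) = b (E u) (E v)
    induction u using TensorProduct.induction_on with
    | zero => simp [hEzero]
    | add y z hy hz => simp only [map_add, LinearMap.add_apply, hEadd, hy, hz]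
    | tmul a₁' l₁ =>
      induction v using TensorProduct.induction_on with
      | zero => simp [hEzero]
      | add y z hy hz => simp only [map_add, hEadd, hy, hz]
      | tmul a₂' l₂ =>
          rw [hpush, hEsmul, hEΦ, hhom]
          have hEp : ∀ (a' : A') (l : L), E (a' ⊗ₜ[K] l) = ε' a' • l := by
            intro a' l; simp [hEdef]
          simp only [hEp, TensorProduct.map_tmul, AlgHom.toLinearMap_apply,
            LinearMap.id_apply, map_one, TensorProduct.lid_tmul, one_smul,
            map_mul, mul_smul, map_smul, LinearMap.smul_apply]
          exact smul_comm (ε' a₁') (ε' a₂') ((b l₁) l₂)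
end

section
/- Let L be the 3-dimensional vector space with basis {e₁,e₂,e₃}, bracket [e₁,e₃] = e₂, [e₃,e₃] = e₁ (all other brackets of basis elements zero), and α the linear map α(e₁) = c²e₁ + ac e₂, α(e₂) = c³e₂, α(e₃) = a e₁ + b e₂ + c e₃ for scalars a,b,c. Then (L, [·,·], α) is a multiplicative Hom-Leibniz algebra: α[x,y] = [α(x),α(y)] and the Hom-Leibniz identity [α(x),[y,z]] = [[x,y],α(z)] − [[x,z],α(y)] hold for all x,y,z. -/
/-- Basis vectors of the 3-dimensional example. -/
noncomputable def e3v (i : Fin 3) : Fin 3 → ℝ := Pi.single i 1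

/-- The bracket with `[e₁,e₃] = e₂`, `[e₃,e₃] = e₁`, all other brackets of basis
elements zero, extended bilinearly. -/
noncomputable def br3 (x y : Fin 3 → ℝ) : Fin 3 → ℝ :=
  (x 0 * y 2) • e3v 1 + (x 2 * y 2) • e3v 0

/-- The map `α` with `α(e₁) = c²e₁ + ac e₂`, `α(e₂) = c³e₂`,
`α(e₃) = a e₁ + b e₂ + c e₃`. -/
noncomputable def alpha8 (a b c : ℝ) (x : Fin 3 → ℝ) : Fin 3 → ℝ :=
  ![c ^ 2 * x 0 + a * x 2, a * c * x 0 + c ^ 3 * x 1 + b * x 2, c * x 2]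

/-- `(L, [·,·], α)` with the above data is a multiplicative Hom-Leibniz algebra. -/
theorem example_multiplicative_homLeibniz (a b c : ℝ) :
    (∀ x y : Fin 3 → ℝ, alpha8 a b c (br3 x y) = br3 (alpha8 a b c x) (alpha8 a b c y)) ∧
    (∀ x y z : Fin 3 → ℝ,
      br3 (alpha8 a b c x) (br3 y z)
        = br3 (br3 x y) (alpha8 a b c z) - br3 (br3 x z) (alpha8 a b c y)) := by
  constructor <;> intros <;> funext i <;> fin_cases i <;>
    simp [br3, alpha8, e3v, Pi.single_apply] <;> ring
end

section
/- Let L be the 3-dimensional vector space with basis {e₁,e₂,e₃}, bracket [e₁,e₃] = e₂, [e₃,e₃] = e₁, and α a linear map of the form α(e₁) = a₁₁e₁ + a₂₁e₂, α(e₂) = a₁₂e₁ + a₂₂e₂, α(e₃) = a₁₃e₁ + a₂₃e₂ + a₃₃e₃. Then (L, [·,·], α) satisfies the Hom-Leibniz identity [α(x),[y,z]] = [[x,y],α(z)] − [[x,z],α(y)] for all x,y,z ∈ L. -/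
/-- A linear map with `α(e₁) = a₁₁e₁ + a₂₁e₂`, `α(e₂) = a₁₂e₁ + a₂₂e₂`,
`α(e₃) = a₁₃e₁ + a₂₃e₂ + a₃₃e₃`. -/
noncomputable def alpha9 (a11 a12 a13 a21 a22 a23 a33 : ℝ) (x : Fin 3 → ℝ) : Fin 3 → ℝ :=
  ![a11 * x 0 + a12 * x 1 + a13 * x 2,
    a21 * x 0 + a22 * x 1 + a23 * x 2,
    a33 * x 2]

/-- With any `α` of the above triangular form, `(L,[·,·],α)` satisfies the
Hom-Leibniz identity. -/
theorem example_homLeibniz_identity (a11 a12 a13 a21 a22 a23 a33 : ℝ) :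
    ∀ x y z : Fin 3 → ℝ,
      br3 (alpha9 a11 a12 a13 a21 a22 a23 a33 x) (br3 y z)
        = br3 (br3 x y) (alpha9 a11 a12 a13 a21 a22 a23 a33 z)
          - br3 (br3 x z) (alpha9 a11 a12 a13 a21 a22 a23 a33 y) := by
  intro x y z
  funext i
  fin_cases i <;>
    simp [br3, alpha9, e3v, Pi.single_apply] <;> ring
end
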